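/- Let NH_n be the number of Motzkin paths of length n that have no horizontal step at their maximal level (i.e., paths of height h with no horizontal step at level h; the empty path is counted, so NH_0 = 1). In the formal power series ring ℚ[[v]], where 1 + v + v² is invertible, the family (NH_n · v^n · (1 + v + v²)^{−n})_{n≥0} is summable and v² · ∑_{n≥0} NH_n · (v·(1 + v + v²)^{−1})^n = (1 + v + v²)·(v² − 1)·∑_{h≥1} (−1)^{h−1} ∑_{k≥1} v^{h·k} + v·(1 + v)·(1 + v + v²). -/

import Mathlib

open Finset
open scoped Classical

/-- A step: `+1`, `-1` or `0`. -/
abbrev Step : Type := ({1, -1, 0} : Finset ℤ)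

/-- Partial sum of the first `k` steps. -/
def psum {n : ℕ} (w : Fin n → Step) (k : ℕ) : ℤ :=
  ∑ i : Fin n, if (i : ℕ) < k then (w i : ℤ) else 0

/-- `w` is a Motzkin path: all partial sums are nonnegative and the total sum is `0`. -/
def IsMotzkin {n : ℕ} (w : Fin n → Step) : Prop :=
  (∀ k ∈ Finset.range (n + 1), 0 ≤ psum w k) ∧ psum w n = 0

/-- The height of a path: the maximum of its partial sums (`0` for the empty path). -/
def height {n : ℕ} (w : Fin n → Step) : ℤ :=
  (Finset.range (n + 1)).sup' (Finset.nonempty_range_iff.mpr (Nat.succ_ne_zero n)) (psum w)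

/-- `w` has a horizontal step at level `j`: some step is `0` and the partial sum up to
and including that step equals `j`. -/
def HasHorizAt {n : ℕ} (w : Fin n → Step) (j : ℤ) : Prop :=
  ∃ i : Fin n, (w i : ℤ) = 0 ∧ psum w ((i : ℕ) + 1) = j

/-- `NH n` is the number of Motzkin paths of length `n` having no horizontal step at
their maximal level. -/
noncomputable def NH (n : ℕ) : ℕ :=
  (Finset.univ.filter fun w : Fin n → Step =>
    IsMotzkin w ∧ ¬ HasHorizAt w (height w)).card

/-- A family of formal power series is (formally) summable if for every degree `m`
only finitely many members of the family have a nonzero coefficient of `v^m`. -/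
def PSSummable (F : ℕ → PowerSeries ℚ) : Prop :=
  ∀ m : ℕ, {n : ℕ | PowerSeries.coeff m (F n) ≠ 0}.Finite

/-- The (formal) sum of a family of power series, computed coefficientwise. -/
noncomputable def PSSum (F : ℕ → PowerSeries ℚ) : PowerSeries ℚ :=
  PowerSeries.mk fun m => ∑ᶠ n : ℕ, PowerSeries.coeff m (F n)

namespace MAux

def Tri (F : ℕ → PowerSeries ℚ) : Prop := ∀ m n : ℕ, m < n → PowerSeries.coeff m (F n) = 0

lemma step_cases (s : Step) : (s : ℤ) = 1 ∨ (s : ℤ) = -1 ∨ (s : ℤ) = 0 := by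
  have h := s.2
  rw [Finset.mem_insert, Finset.mem_insert, Finset.mem_singleton] at h
  exact h

def stepU : Step := ⟨1, by decide⟩
def stepD : Step := ⟨-1, by decide⟩
def stepH : Step := ⟨0, by decide⟩

lemma sum_step {M : Type*} [AddCommMonoid M] (g : Step → M) :
    ∑ s : Step, g s = g stepU + g stepD + g stepH := by
  have huniv : (Finset.univ : Finset Step) = {stepU, stepD, stepH} := by decide
  rw [huniv, Finset.sum_insert (by decide), Finset.sum_insert (by decide),
    Finset.sum_singleton, add_assoc]

lemma psum_snoc_le {n : ℕ} (v : Fin n → Step) (s : Step) {k : ℕ} (hk : k ≤ n) :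
    psum (Fin.snoc v s) k = psum v k := by
  unfold psum
  rw [Fin.sum_univ_castSucc]
  simp only [Fin.snoc_castSucc, Fin.coe_castSucc, Fin.val_last]
  rw [if_neg (by omega), add_zero]

lemma psum_snoc_succ {n : ℕ} (v : Fin n → Step) (s : Step) :
    psum (Fin.snoc v s) (n + 1) = psum v n + (s : ℤ) := by
  unfold psum
  rw [Fin.sum_univ_castSucc]
  simp only [Fin.snoc_castSucc, Fin.coe_castSucc, Fin.val_last, Fin.snoc_last]
  rw [if_pos (Nat.lt_succ_self n)]
  congr 1
  refine Finset.sum_congr rfl fun i _ => ?_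
  rw [if_pos (by omega), if_pos i.2]

lemma psum_le {n : ℕ} (w : Fin n → Step) (k : ℕ) : psum w k ≤ (k : ℤ) := by
  have h1 : psum w k ≤ ∑ i : Fin n, (if (i : ℕ) < k then (1 : ℤ) else 0) := by
    refine Finset.sum_le_sum fun i _ => ?_
    split
    · rcases step_cases (w i) with h | h | h <;> omega
    · exact le_refl 0
  refine h1.trans ?_
  rw [Finset.sum_boole]
  have h2 : (Finset.univ.filter (fun i : Fin n => (i : ℕ) < k)).card ≤ (Finset.range k).card := by
    apply Finset.card_le_card_of_injOn (fun i : Fin n => (i : ℕ))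
    · intro i hi; exact Finset.mem_range.2 (Finset.mem_filter.1 hi).2
    · intro a _ b _ hab; exact Fin.val_injective hab
  rw [Finset.card_range] at h2
  exact_mod_cast h2

/-- Strip-walk condition. -/
def cond (top : Bool) (h n j : ℕ) (w : Fin n → Step) : Prop :=
  (∀ k ∈ Finset.range (n + 1), 0 ≤ psum w k ∧ psum w k ≤ (h : ℤ)) ∧ psum w n = (j : ℤ) ∧
    (top = false → ∀ i : Fin n, (w i : ℤ) = 0 → psum w ((i : ℕ) + 1) ≠ (h : ℤ))

noncomputable def W (top : Bool) (h n j : ℕ) : ℕ :=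
  (Finset.univ.filter (cond top h n j)).card

lemma psum_empty (w : Fin 0 → Step) (k : ℕ) : psum w k = 0 := by simp [psum]

lemma W_zero (top : Bool) (h j : ℕ) : W top h 0 j = if j = 0 then 1 else 0 := by
  rcases eq_or_ne j 0 with rfl | hj
  · rw [if_pos rfl, W]
    have he : (Finset.univ.filter (cond top h 0 0)) = Finset.univ := by
      refine Finset.filter_true_of_mem fun w _ => ?_
      exact ⟨fun k _ => by simp [psum_empty], by simp [psum_empty], fun _ i => i.elim0⟩
    rw [he]
    simp
  · rw [if_neg hj, W]
    have he : (Finset.univ.filter (cond top h 0 j)) = ∅ := by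
      refine Finset.filter_false_of_mem fun w _ hc => ?_
      have h0 := hc.2.1
      rw [psum_empty] at h0
      exact hj (by exact_mod_cast h0.symm)
    rw [he, Finset.card_empty]

lemma W_gt (top : Bool) (h n j : ℕ) (hj : h < j) : W top h n j = 0 := by
  rw [W]
  have he : (Finset.univ.filter (cond top h n j)) = ∅ := by
    refine Finset.filter_false_of_mem fun w _ hc => ?_
    have h1 := (hc.1 n (by simp)).2
    rw [hc.2.1] at h1
    have : (j : ℤ) ≤ h := h1
    omega
  rw [he, Finset.card_empty]

lemma cond_snoc (top : Bool) (h n j : ℕ) (hj : j ≤ h) (v : Fin n → Step) (s : Step) :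
    cond top h (n + 1) j (Fin.snoc v s) ↔
      (∀ k ∈ Finset.range (n + 1), 0 ≤ psum v k ∧ psum v k ≤ (h : ℤ)) ∧
      psum v n + (s : ℤ) = (j : ℤ) ∧
      (top = false →
        ((∀ i : Fin n, (v i : ℤ) = 0 → psum v ((i : ℕ) + 1) ≠ (h : ℤ)) ∧
          ((s : ℤ) = 0 → (j : ℤ) ≠ (h : ℤ)))) := by
  constructor
  · rintro ⟨hb, he, hh⟩
    have hev : psum v n + (s : ℤ) = (j : ℤ) := by rw [← psum_snoc_succ]; exact he
    refine ⟨fun k hk => ?_, hev, fun ht => ⟨fun i hi => ?_, fun _ => ?_⟩⟩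
    · have hk' : k ≤ n := by have := Finset.mem_range.1 hk; omega
      have := hb k (Finset.mem_range.2 (by omega))
      rwa [psum_snoc_le v s hk'] at this
    · have := hh ht i.castSucc (by rwa [Fin.snoc_castSucc])
      rwa [Fin.coe_castSucc, psum_snoc_le v s (by omega)] at this
    · have hlast := hh ht (Fin.last n) (by rwa [Fin.snoc_last])
      rw [Fin.val_last] at hlast
      intro hjh
      exact hlast (by rw [he, hjh])
  · rintro ⟨hb, he, hh⟩
    refine ⟨fun k hk => ?_, by rw [psum_snoc_succ, he], fun ht i => ?_⟩
    · have hk2 := Finset.mem_range.1 hk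
      rcases Nat.lt_or_ge k (n + 1) with hlt | hge
      · rw [psum_snoc_le v s (by omega)]
        exact hb k (Finset.mem_range.2 hlt)
      · have hkeq : k = n + 1 := by omega
        subst hkeq
        rw [psum_snoc_succ, he]
        exact ⟨Int.natCast_nonneg j, by exact_mod_cast hj⟩
    · induction i using Fin.lastCases with
      | last =>
        intro hi0
        rw [Fin.snoc_last] at hi0
        rw [Fin.val_last, psum_snoc_succ, he]
        exact (hh ht).2 hi0
      | cast i =>
        intro hi0
        rw [Fin.snoc_castSucc] at hi0
        rw [Fin.coe_castSucc, psum_snoc_le v s (by omega)]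
        exact (hh ht).1 i hi0

lemma W_succ (top : Bool) (h n j : ℕ) (hj : j ≤ h) :
    W top h (n + 1) j = (if j = 0 then 0 else W top h n (j - 1)) + W top h n (j + 1)
      + (if top = false ∧ j = h then 0 else W top h n j) := by
  have hsplit : W top h (n + 1) j
      = ∑ s : Step, (Finset.univ.filter
          (fun v : Fin n → Step => cond top h (n + 1) j (Fin.snoc v s))).card := by
    rw [W, Finset.card_filter,
      ← Equiv.sum_comp (Fin.snocEquiv (fun _ => Step))
        (fun w => if cond top h (n + 1) j w then (1 : ℕ) else 0),
      Fintype.sum_prod_type]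
    refine Finset.sum_congr rfl fun s _ => ?_
    rw [Finset.card_filter]
    refine Finset.sum_congr rfl fun v _ => ?_
    congr 1
  have hU : (Finset.univ.filter
      (fun v : Fin n → Step => cond top h (n + 1) j (Fin.snoc v stepU))).card
      = (if j = 0 then 0 else W top h n (j - 1)) := by
    have hsU : ((stepU : Step) : ℤ) = 1 := rfl
    rcases eq_or_ne j 0 with rfl | hj0
    · rw [if_pos rfl]
      have he : (Finset.univ.filter
          (fun v : Fin n → Step => cond top h (n + 1) 0 (Fin.snoc v stepU))) = ∅ := by
        refine Finset.filter_false_of_mem fun v _ hc => ?_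
        rw [cond_snoc top h n 0 (by omega)] at hc
        have h1 := (hc.1 n (by simp)).1
        have h2 := hc.2.1
        rw [hsU] at h2
        simp at h2
        omega
      rw [he, Finset.card_empty]
    · rw [if_neg hj0, W]
      congr 1
      refine Finset.filter_congr fun v _ => ?_
      rw [cond_snoc top h n j hj]
      obtain ⟨j', rfl⟩ : ∃ j', j = j' + 1 := ⟨j - 1, by omega⟩
      unfold cond
      rw [hsU]
      constructor
      · rintro ⟨hb, he, hh⟩
        refine ⟨hb, by push_cast at he ⊢; omega, fun ht => (hh ht).1⟩
      · rintro ⟨hb, he, hh⟩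
        refine ⟨hb, by push_cast at he ⊢; omega, fun ht => ⟨hh ht, fun h10 => by norm_num at h10⟩⟩
  have hD : (Finset.univ.filter
      (fun v : Fin n → Step => cond top h (n + 1) j (Fin.snoc v stepD))).card
      = W top h n (j + 1) := by
    have hsD : ((stepD : Step) : ℤ) = -1 := rfl
    rw [W]
    congr 1
    refine Finset.filter_congr fun v _ => ?_
    rw [cond_snoc top h n j hj]
    unfold cond
    rw [hsD]
    constructor
    · rintro ⟨hb, he, hh⟩
      refine ⟨hb, by push_cast at he ⊢; omega, fun ht => (hh ht).1⟩
    · rintro ⟨hb, he, hh⟩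
      refine ⟨hb, by push_cast at he ⊢; omega, fun ht => ⟨hh ht, fun h10 => by norm_num at h10⟩⟩
  have hH : (Finset.univ.filter
      (fun v : Fin n → Step => cond top h (n + 1) j (Fin.snoc v stepH))).card
      = (if top = false ∧ j = h then 0 else W top h n j) := by
    have hsH : ((stepH : Step) : ℤ) = 0 := rfl
    by_cases hc : top = false ∧ j = h
    · rw [if_pos hc]
      have he : (Finset.univ.filter
          (fun v : Fin n → Step => cond top h (n + 1) j (Fin.snoc v stepH))) = ∅ := by
        refine Finset.filter_false_of_mem fun v _ hcd => ?_
        rw [cond_snoc top h n j hj] at hcd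
        have := (hcd.2.2 hc.1).2 (by rw [hsH])
        exact this (by rw [hc.2])
      rw [he, Finset.card_empty]
    · rw [if_neg hc, W]
      congr 1
      refine Finset.filter_congr fun v _ => ?_
      rw [cond_snoc top h n j hj]
      unfold cond
      constructor
      · rintro ⟨hb, he, hh⟩
        refine ⟨hb, by rw [hsH] at he; omega, fun ht => (hh ht).1⟩
      · rintro ⟨hb, he, hh⟩
        refine ⟨hb, by rw [hsH]; omega, fun ht => ⟨hh ht, fun _ => ?_⟩⟩
        have hjh : j ≠ h := fun hjh => hc ⟨ht, hjh⟩
        exact_mod_cast hjh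
  rw [hsplit, sum_step, hU, hD, hH]


lemma cond_iff_of_large (top : Bool) (h n j : ℕ) (H : n ≤ h) (H2 : top = false → n < h)
    (w : Fin n → Step) :
    cond top h n j w ↔ ((∀ k ∈ Finset.range (n + 1), 0 ≤ psum w k) ∧ psum w n = (j : ℤ)) := by
  constructor
  · rintro ⟨hb, he, -⟩
    exact ⟨fun k hk => (hb k hk).1, he⟩
  · rintro ⟨hb, he⟩
    refine ⟨fun k hk => ⟨hb k hk, ?_⟩, he, fun ht i hi0 => ?_⟩
    · have h1 := psum_le w k
      have h2 := Finset.mem_range.1 hk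
      omega
    · have h1 := psum_le w ((i : ℕ) + 1)
      have h2 := i.2
      have h3 := H2 ht
      omega

lemma W_stable (top top' : Bool) (h h' n j : ℕ) (H : n ≤ h) (H2 : top = false → n < h)
    (H' : n ≤ h') (H2' : top' = false → n < h') : W top h n j = W top' h' n j := by
  unfold W
  congr 1
  refine Finset.filter_congr fun w _ => ?_
  rw [cond_iff_of_large top h n j H H2 w, cond_iff_of_large top' h' n j H' H2' w]

lemma psum_zero' {n : ℕ} (w : Fin n → Step) : psum w 0 = 0 := by simp [psum]

lemma height_nonneg {n : ℕ} (w : Fin n → Step) : 0 ≤ height w := by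
  have h1 : psum w 0 ≤ height w := Finset.le_sup' (psum w) (by simp)
  rwa [psum_zero'] at h1

lemma cond_false_iff (h n : ℕ) (w : Fin n → Step) :
    cond false h n 0 w ↔ (IsMotzkin w ∧ height w ≤ (h : ℤ) ∧ ¬ HasHorizAt w (h : ℤ)) := by
  unfold cond IsMotzkin
  constructor
  · rintro ⟨hb, he, hh⟩
    refine ⟨⟨fun k hk => (hb k hk).1, by exact_mod_cast he⟩, ?_, ?_⟩
    · exact Finset.sup'_le _ _ fun k hk => (hb k hk).2
    · rintro ⟨i, hi0, hpi⟩
      exact hh rfl i hi0 hpi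
  · rintro ⟨⟨hb, he⟩, hht, hhh⟩
    exact ⟨fun k hk => ⟨hb k hk, le_trans (Finset.le_sup' (psum w) hk) hht⟩,
      by exact_mod_cast he, fun _ i hi0 hpi => hhh ⟨i, hi0, hpi⟩⟩

lemma cond_true_iff (h n : ℕ) (w : Fin n → Step) :
    cond true h n 0 w ↔ (IsMotzkin w ∧ height w ≤ (h : ℤ)) := by
  unfold cond IsMotzkin
  constructor
  · rintro ⟨hb, he, -⟩
    exact ⟨⟨fun k hk => (hb k hk).1, by exact_mod_cast he⟩,
      Finset.sup'_le _ _ fun k hk => (hb k hk).2⟩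
  · rintro ⟨⟨hb, he⟩, hht⟩
    exact ⟨fun k hk => ⟨hb k hk, le_trans (Finset.le_sup' (psum w) hk) hht⟩,
      by exact_mod_cast he, fun ht => absurd ht (by decide)⟩

lemma card_split (h n : ℕ) :
    W false h n 0 = (if h = 0 then 0 else W true (h - 1) n 0)
      + (Finset.univ.filter (fun w : Fin n → Step =>
          IsMotzkin w ∧ height w = (h : ℤ) ∧ ¬ HasHorizAt w (h : ℤ))).card := by
  rcases Nat.eq_zero_or_pos h with rfl | hpos
  · rw [if_pos rfl, zero_add, W]
    congr 1
    refine Finset.filter_congr fun w _ => ?_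
    rw [cond_false_iff]
    have h0 := height_nonneg w
    constructor
    · rintro ⟨hm, hle, hh⟩
      exact ⟨hm, by omega, by simpa using hh⟩
    · rintro ⟨hm, heq, hh⟩
      exact ⟨hm, by omega, by simpa using hh⟩
  · obtain ⟨h', rfl⟩ : ∃ h', h = h' + 1 := ⟨h - 1, by omega⟩
    rw [if_neg (by omega)]
    have hsub : (h' + 1) - 1 = h' := by omega
    rw [hsub, W, W]
    have hsplit : Finset.univ.filter (cond false (h' + 1) n 0)
        = Finset.univ.filter (cond true h' n 0)
          ∪ Finset.univ.filter (fun w : Fin n → Step =>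
              IsMotzkin w ∧ height w = ((h' + 1 : ℕ) : ℤ) ∧ ¬ HasHorizAt w ((h' + 1 : ℕ) : ℤ)) := by
      rw [← Finset.filter_or]
      refine Finset.filter_congr fun w _ => ?_
      rw [cond_false_iff, cond_true_iff]
      constructor
      · rintro ⟨hm, hle, hh⟩
        rcases lt_or_eq_of_le hle with hlt | heq
        · exact Or.inl ⟨hm, by push_cast at hlt ⊢; omega⟩
        · exact Or.inr ⟨hm, heq, hh⟩
      · rintro (⟨hm, hle⟩ | ⟨hm, heq, hh⟩)
        · refine ⟨hm, by push_cast at hle ⊢; omega, ?_⟩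
          rintro ⟨i, hi0, hpi⟩
          have h1 : psum w ((i : ℕ) + 1) ≤ height w :=
            Finset.le_sup' (psum w) (Finset.mem_range.2 (by have := i.2; omega))
          push_cast at hpi hle
          omega
        · exact ⟨hm, le_of_eq heq, hh⟩
    rw [hsplit, Finset.card_union_of_disjoint]
    rw [Finset.disjoint_left]
    intro w hw1 hw2
    rw [Finset.mem_filter, cond_true_iff] at hw1
    rw [Finset.mem_filter] at hw2
    have h1 := hw1.2.2
    have h2 := hw2.2.2.1
    push_cast at h1 h2
    omega

lemma NH_card_eq (n : ℕ) : NH n = ∑ h ∈ Finset.range (n + 1),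
    (Finset.univ.filter (fun w : Fin n → Step =>
      IsMotzkin w ∧ height w = (h : ℤ) ∧ ¬ HasHorizAt w (h : ℤ))).card := by
  rw [NH]
  rw [Finset.card_eq_sum_card_fiberwise
    (f := fun w : Fin n → Step => (height w).toNat) (t := Finset.range (n + 1)) ?_]
  · refine Finset.sum_congr rfl fun h hh => ?_
    rw [Finset.filter_filter]
    congr 1
    refine Finset.filter_congr fun w _ => ?_
    have h0 := height_nonneg w
    constructor
    · rintro ⟨⟨hm, hhh⟩, ht⟩
      have heq : height w = (h : ℤ) := by omega
      exact ⟨hm, heq, by rwa [heq] at hhh⟩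
    · rintro ⟨hm, heq, ht⟩
      exact ⟨⟨hm, by rwa [heq]⟩, by omega⟩
  · intro w hw
    have hle : height w ≤ (n : ℤ) := by
      refine Finset.sup'_le _ _ fun k hk => ?_
      have h1 := psum_le w k
      have h2 := Finset.mem_range.1 hk
      omega
    have h0 := height_nonneg w
    rw [Finset.mem_coe, Finset.mem_range]
    show (height w).toNat < n + 1
    omega

lemma NH_eq_sum (n : ℕ) : (NH n : ℚ)
    = ∑ h ∈ Finset.range (n + 1),
        ((W false h n 0 : ℚ) - (if h = 0 then 0 else (W true (h - 1) n 0 : ℚ))) := by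
  rw [NH_card_eq n]
  push_cast
  refine Finset.sum_congr rfl fun h _ => ?_
  have hc := card_split h n
  rcases eq_or_ne h 0 with rfl | hne
  · rw [if_pos rfl] at hc ⊢
    rw [hc]
    push_cast
    ring
  · rw [if_neg hne] at hc ⊢
    rw [hc]
    push_cast
    ring


open PowerSeries in
lemma coeff_PSSum {F : ℕ → PowerSeries ℚ} (hF : Tri F) (m : ℕ) :
    coeff m (PSSum F) = ∑ n ∈ Finset.range (m + 1), coeff m (F n) := by
  rw [PSSum, coeff_mk]
  apply finsum_eq_sum_of_support_subset
  intro n hn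
  simp only [Function.mem_support] at hn
  simp only [Finset.coe_range, Set.mem_Iio]
  by_contra hcon
  exact hn (hF m n (by omega))

open PowerSeries in
lemma PSSum_zero : PSSum (fun _ => (0 : PowerSeries ℚ)) = 0 := by
  ext m
  rw [PSSum, coeff_mk]
  simp

lemma tri_zero : Tri (fun _ => (0 : PowerSeries ℚ)) := fun _ _ _ => by simp

lemma tri_add {F G : ℕ → PowerSeries ℚ} (hF : Tri F) (hG : Tri G) :
    Tri (fun n => F n + G n) := fun m n hmn => by
  simp [hF m n hmn, hG m n hmn]

lemma tri_sub {F G : ℕ → PowerSeries ℚ} (hF : Tri F) (hG : Tri G) :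
    Tri (fun n => F n - G n) := fun m n hmn => by
  simp [hF m n hmn, hG m n hmn]

open PowerSeries in
lemma tri_summable {F : ℕ → PowerSeries ℚ} (hF : Tri F) : PSSummable F := by
  intro m
  apply Set.Finite.subset (Set.finite_Iic m)
  intro n hn
  simp only [Set.mem_setOf_eq] at hn
  by_contra hcon
  exact hn (hF m n (by simp only [Set.mem_Iic] at hcon; omega))

open PowerSeries in
lemma PSSum_add {F G : ℕ → PowerSeries ℚ} (hF : Tri F) (hG : Tri G) :
    PSSum (fun n => F n + G n) = PSSum F + PSSum G := by
  ext m
  rw [map_add, coeff_PSSum (tri_add hF hG), coeff_PSSum hF, coeff_PSSum hG,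
    ← Finset.sum_add_distrib]
  simp

open PowerSeries in
lemma tri_mul_left (A : PowerSeries ℚ) {F : ℕ → PowerSeries ℚ} (hF : Tri F) :
    Tri (fun n => A * F n) := by
  intro m n hmn
  rw [coeff_mul]
  refine Finset.sum_eq_zero fun p hp => ?_
  have hp2 := Finset.HasAntidiagonal.mem_antidiagonal.1 hp
  rw [hF p.2 n (by omega), mul_zero]

open PowerSeries in
lemma PSSum_mul_left (A : PowerSeries ℚ) {F : ℕ → PowerSeries ℚ} (hF : Tri F) :
    A * PSSum F = PSSum (fun n => A * F n) := by
  ext m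
  rw [coeff_PSSum (tri_mul_left A hF), coeff_mul]
  have step : ∀ p : ℕ × ℕ, p ∈ Finset.HasAntidiagonal.antidiagonal m →
      coeff p.1 A * coeff p.2 (PSSum F)
        = ∑ n ∈ Finset.range (m + 1), coeff p.1 A * coeff p.2 (F n) := by
    intro p hp
    have hp2 := Finset.HasAntidiagonal.mem_antidiagonal.1 hp
    rw [coeff_PSSum hF, Finset.mul_sum]
    refine Finset.sum_subset (Finset.range_subset_range.2 (show p.2 + 1 ≤ m + 1 by omega)) ?_
    intro n _ hn2
    rw [hF p.2 n (by simp only [Finset.mem_range] at hn2 ⊢; omega), mul_zero]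
  rw [Finset.sum_congr rfl step, Finset.sum_comm]
  refine Finset.sum_congr rfl fun n _ => ?_
  rw [coeff_mul]

open PowerSeries in
lemma tri_shift {F : ℕ → PowerSeries ℚ} (hF : Tri F) : Tri (fun n => F (n + 1)) :=
  fun m n hmn => hF m (n + 1) (by omega)

open PowerSeries in
lemma PSSum_shift {F : ℕ → PowerSeries ℚ} (hF : Tri F) :
    PSSum F = F 0 + PSSum (fun n => F (n + 1)) := by
  ext m
  rw [map_add, coeff_PSSum hF, coeff_PSSum (tri_shift hF), Finset.sum_range_succ' _ m]
  rw [Finset.sum_range_succ, hF m (m + 1) (by omega), add_zero, add_comm]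

open PowerSeries in
lemma PSSum_ite (b : Prop) [Decidable b] (F : ℕ → PowerSeries ℚ) :
    PSSum (fun n => if b then 0 else F n) = if b then 0 else PSSum F := by
  split_ifs
  · exact PSSum_zero
  · rfl

noncomputable def xx : PowerSeries ℚ := PowerSeries.X * (1 + PowerSeries.X + PowerSeries.X ^ 2 : PowerSeries ℚ)⁻¹

open PowerSeries in
lemma coeff_mul_xx_pow_lt {m n : ℕ} (hmn : m < n) (A : PowerSeries ℚ) :
    coeff m (A * xx ^ n) = 0 := by
  rw [xx, mul_pow, mul_left_comm, coeff_X_pow_mul', if_neg (by omega)]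

open PowerSeries in
lemma tri_xx (c : ℕ → ℚ) : Tri (fun n => C (c n) * xx ^ n) :=
  fun m n hmn => coeff_mul_xx_pow_lt hmn _

open PowerSeries in
noncomputable def Gser (top : Bool) (h j : ℕ) : PowerSeries ℚ :=
  PSSum (fun n => C ((W top h n j : ℚ)) * xx ^ n)

open PowerSeries in
lemma Gser_gt (top : Bool) (h j : ℕ) (hj : h < j) : Gser top h j = 0 := by
  rw [Gser]
  have he : (fun n => C ((W top h n j : ℚ)) * xx ^ n) = fun _ => 0 := by
    funext n
    rw [W_gt top h n j hj]
    simp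
  rw [he, PSSum_zero]

open PowerSeries in
lemma coeff_Gser (top : Bool) (h j p : ℕ) :
    coeff p (Gser top h j)
      = ∑ n ∈ Finset.range (p + 1), (W top h n j : ℚ) * coeff p (xx ^ n) := by
  rw [Gser, coeff_PSSum (tri_xx _)]
  refine Finset.sum_congr rfl fun n _ => ?_
  rw [coeff_C_mul]

open PowerSeries in
lemma Gser_eq (top : Bool) (h j : ℕ) (hj : j ≤ h) :
    Gser top h j = C (if j = 0 then 1 else 0)
      + xx * ((if j = 0 then 0 else Gser top h (j - 1)) + Gser top h (j + 1)
          + (if top = false ∧ j = h then 0 else Gser top h j)) := by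
  have htri : Tri (fun n => C ((W top h n j : ℚ)) * xx ^ n) := tri_xx _
  conv_lhs => rw [Gser, PSSum_shift htri]
  have h0 : C ((W top h 0 j : ℚ)) * xx ^ 0 = C (if j = 0 then 1 else 0) := by
    rw [pow_zero, mul_one, W_zero]
    rcases eq_or_ne j 0 with rfl | hne <;> simp [*]
  rw [h0]
  congr 1
  -- shifted sum
  have hFA : Tri (fun n => if j = 0 then 0 else C ((W top h n (j - 1) : ℚ)) * xx ^ n) := by
    split_ifs
    · exact tri_zero
    · exact tri_xx _
  have hFB : Tri (fun n => C ((W top h n (j + 1) : ℚ)) * xx ^ n) := tri_xx _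
  have hFD : Tri (fun n => if top = false ∧ j = h then 0
      else C ((W top h n j : ℚ)) * xx ^ n) := by
    split_ifs
    · exact tri_zero
    · exact tri_xx _
  have hfam : (fun n => C ((W top h (n + 1) j : ℚ)) * xx ^ (n + 1))
      = fun n => xx * ((if j = 0 then 0 else C ((W top h n (j - 1) : ℚ)) * xx ^ n)
          + C ((W top h n (j + 1) : ℚ)) * xx ^ n
          + (if top = false ∧ j = h then 0 else C ((W top h n j : ℚ)) * xx ^ n)) := by
    funext n
    rw [W_succ top h n j hj]
    push_cast
    rw [map_add, map_add]
    split_ifs with h1 h2 h2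
    · simp only [map_zero]
      ring
    · simp only [map_zero]
      ring
    · simp only [map_zero]
      ring
    · ring
  rw [hfam, ← PSSum_mul_left _ (tri_add (tri_add hFA hFB) hFD),
    PSSum_add (tri_add hFA hFB) hFD, PSSum_add hFA hFB, PSSum_ite, PSSum_ite]
  rfl


open PowerSeries in
noncomputable def CF (b h j : ℕ) : PowerSeries ℚ :=
  if j ≤ h then
    (1 + X + X ^ 2 : PowerSeries ℚ) * (X ^ j - X ^ (h + 1 + b + (h - j)))
      * (1 - X ^ (2 * h + 3 + b) : PowerSeries ℚ)⁻¹
  else 0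

open PowerSeries in
lemma CF_of_le {b h j : ℕ} (d : ℕ) (hd : h = j + d) :
    CF b h j = (1 + X + X ^ 2 : PowerSeries ℚ) * (X ^ j - X ^ (j + d + 1 + b + d))
      * (1 - X ^ (2 * j + 2 * d + 3 + b) : PowerSeries ℚ)⁻¹ := by
  subst hd
  rw [CF, if_pos (by omega)]
  rw [show j + d + 1 + b + (j + d - j) = j + d + 1 + b + d from by omega,
    show 2 * (j + d) + 3 + b = 2 * j + 2 * d + 3 + b from by omega]

lemma CF_of_gt {b h j : ℕ} (hj : h < j) : CF b h j = 0 := by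
  rw [CF, if_neg (by omega)]

open PowerSeries in
lemma constCoeff_one_sub_X_pow (e : ℕ) (he : 0 < e) :
    constantCoeff (1 - X ^ e : PowerSeries ℚ) ≠ 0 := by
  rw [map_sub, map_one, map_pow, constantCoeff_X, zero_pow (by omega)]
  norm_num

open PowerSeries in
lemma constCoeff_u1 : constantCoeff (1 + X + X ^ 2 : PowerSeries ℚ) ≠ 0 := by
  rw [map_add, map_add, map_one, map_pow, constantCoeff_X]
  norm_num

open PowerSeries in
lemma coeff_xx_zero : coeff 0 xx = 0 := by
  rw [xx, coeff_zero_eq_constantCoeff, map_mul, constantCoeff_X, zero_mul]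

open PowerSeries in
lemma CF_eq (b h j : ℕ) (hb : b = 0 ∨ b = 1) (hj : j ≤ h) :
    CF b h j = C (if j = 0 then 1 else 0)
      + xx * ((if j = 0 then 0 else CF b h (j - 1)) + CF b h (j + 1)
          + (if b = 0 ∧ j = h then 0 else CF b h j)) := by
  obtain ⟨d, rfl⟩ : ∃ d, h = j + d := ⟨h - j, by omega⟩
  have e1 := PowerSeries.mul_inv_cancel (1 + X + X ^ 2 : PowerSeries ℚ) constCoeff_u1
  have e2 := PowerSeries.mul_inv_cancel (1 - X ^ (2 * j + 2 * d + 3 + b) : PowerSeries ℚ)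
    (constCoeff_one_sub_X_pow _ (by omega))
  rw [xx]
  rcases Nat.eq_zero_or_pos j with rfl | hjpos
  · -- j = 0
    rw [if_pos rfl, if_pos rfl, map_one]
    rcases Nat.eq_zero_or_pos d with rfl | hdpos
    · -- j = 0, d = 0, h = 0
      rw [CF_of_le (b := b) (h := 0 + 0) (j := 0) 0 rfl,
        CF_of_gt (b := b) (h := 0 + 0) (j := 0 + 1) (by omega)]
      rcases hb with rfl | rfl
      · rw [if_pos (show (0:ℕ) = 0 ∧ (0:ℕ) = 0 + 0 from ⟨rfl, rfl⟩)]
        linear_combination e2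
      · rw [if_neg (show ¬((1:ℕ) = 0 ∧ (0:ℕ) = 0 + 0) from fun hc => Nat.one_ne_zero hc.1)]
        linear_combination (-(X * (1 - X ^ 2))
          * (1 - X ^ (2*0+2*0+3+1) : PowerSeries ℚ)⁻¹) * e1 + e2
    · -- j = 0, d ≥ 1
      obtain ⟨d', rfl⟩ : ∃ d', d = d' + 1 := ⟨d - 1, by omega⟩
      rw [CF_of_le (b := b) (h := 0 + (d' + 1)) (j := 0) (d' + 1) rfl,
        CF_of_le (b := b) (h := 0 + (d' + 1)) (j := 0 + 1) d' (by omega),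
        if_neg (show ¬(b = 0 ∧ (0:ℕ) = 0 + (d' + 1)) from fun hc => by omega)]
      rw [show 2 * (0 + 1) + 2 * d' + 3 + b = 2 * 0 + 2 * (d' + 1) + 3 + b from by ring]
      rcases hb with rfl | rfl
      · linear_combination (-(X * ((X ^ (0 + 1) - X ^ (0 + 1 + d' + 1 + 0 + d'))
            + (X ^ 0 - X ^ (0 + (d' + 1) + 1 + 0 + (d' + 1)))))
            * (1 - X ^ (2 * 0 + 2 * (d' + 1) + 3 + 0) : PowerSeries ℚ)⁻¹) * e1 + e2
      · linear_combination (-(X * ((X ^ (0 + 1) - X ^ (0 + 1 + d' + 1 + 1 + d'))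
            + (X ^ 0 - X ^ (0 + (d' + 1) + 1 + 1 + (d' + 1)))))
            * (1 - X ^ (2 * 0 + 2 * (d' + 1) + 3 + 1) : PowerSeries ℚ)⁻¹) * e1 + e2
  · -- j ≥ 1
    obtain ⟨j', rfl⟩ : ∃ j', j = j' + 1 := ⟨j - 1, by omega⟩
    rw [if_neg (show ¬(j' + 1 = 0) by omega), if_neg (show ¬(j' + 1 = 0) by omega),
      map_zero, Nat.add_sub_cancel]
    rcases Nat.eq_zero_or_pos d with rfl | hdpos
    · -- j = h ≥ 1
      rw [CF_of_le (b := b) (h := j' + 1 + 0) (j := j' + 1) 0 rfl,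
        CF_of_gt (b := b) (h := j' + 1 + 0) (j := j' + 1 + 1) (by omega),
        CF_of_le (b := b) (h := j' + 1 + 0) (j := j') 1 (by omega)]
      rw [show 2 * j' + 2 * 1 + 3 + b = 2 * (j' + 1) + 2 * 0 + 3 + b from by ring]
      rcases hb with rfl | rfl
      · rw [if_pos (show (0:ℕ) = 0 ∧ j' + 1 = j' + 1 + 0 from ⟨rfl, by omega⟩)]
        linear_combination (-(X * (X ^ j' - X ^ (j' + 1 + 1 + 0 + 1)))
          * (1 - X ^ (2 * (j' + 1) + 2 * 0 + 3 + 0) : PowerSeries ℚ)⁻¹) * e1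
      · rw [if_neg (show ¬((1:ℕ) = 0 ∧ j' + 1 = j' + 1 + 0) from fun hc => Nat.one_ne_zero hc.1)]
        linear_combination (-(X * ((X ^ j' - X ^ (j' + 1 + 1 + 1 + 1))
            + (X ^ (j' + 1) - X ^ (j' + 1 + 0 + 1 + 1 + 0))))
            * (1 - X ^ (2 * (j' + 1) + 2 * 0 + 3 + 1) : PowerSeries ℚ)⁻¹) * e1
    · -- 0 < j < h
      obtain ⟨d', rfl⟩ : ∃ d', d = d' + 1 := ⟨d - 1, by omega⟩
      rw [CF_of_le (b := b) (h := j' + 1 + (d' + 1)) (j := j' + 1) (d' + 1) rfl,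
        CF_of_le (b := b) (h := j' + 1 + (d' + 1)) (j := j') (d' + 2) (by omega),
        CF_of_le (b := b) (h := j' + 1 + (d' + 1)) (j := j' + 1 + 1) d' (by omega),
        if_neg (show ¬(b = 0 ∧ j' + 1 = j' + 1 + (d' + 1)) from fun hc => by omega)]
      rw [show 2 * j' + 2 * (d' + 2) + 3 + b = 2 * (j' + 1) + 2 * (d' + 1) + 3 + b from by ring,
        show 2 * (j' + 1 + 1) + 2 * d' + 3 + b = 2 * (j' + 1) + 2 * (d' + 1) + 3 + b from by ring]
      rcases hb with rfl | rfl
      · linear_combination (-(X * ((X ^ j' - X ^ (j' + (d' + 2) + 1 + 0 + (d' + 2)))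
            + (X ^ (j' + 1 + 1) - X ^ (j' + 1 + 1 + d' + 1 + 0 + d'))
            + (X ^ (j' + 1) - X ^ (j' + 1 + (d' + 1) + 1 + 0 + (d' + 1)))))
            * (1 - X ^ (2 * (j' + 1) + 2 * (d' + 1) + 3 + 0) : PowerSeries ℚ)⁻¹) * e1
      · linear_combination (-(X * ((X ^ j' - X ^ (j' + (d' + 2) + 1 + 1 + (d' + 2)))
            + (X ^ (j' + 1 + 1) - X ^ (j' + 1 + 1 + d' + 1 + 1 + d'))
            + (X ^ (j' + 1) - X ^ (j' + 1 + (d' + 1) + 1 + 1 + (d' + 1)))))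
            * (1 - X ^ (2 * (j' + 1) + 2 * (d' + 1) + 3 + 1) : PowerSeries ℚ)⁻¹) * e1


open PowerSeries in
lemma Gser_eq_CF (top : Bool) (h : ℕ) :
    ∀ j, Gser top h j = CF (if top then 1 else 0) h j := by
  set b := if top then 1 else 0 with hbdef
  have hb : b = 0 ∨ b = 1 := by cases top <;> simp [hbdef]
  have hflag : ∀ j : ℕ, (top = false ∧ j = h) ↔ (b = 0 ∧ j = h) := by
    cases top <;> simp [hbdef]
  have main : ∀ m : ℕ, ∀ j : ℕ, coeff m (Gser top h j) = coeff m (CF b h j) := by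
    intro m
    induction m using Nat.strong_induction_on with
    | _ m IH =>
      intro j
      rcases Nat.lt_or_ge h j with hgt | hle
      · rw [Gser_gt top h j hgt, CF_of_gt hgt]
      · rw [Gser_eq top h j hle, CF_eq b h j hb hle]
        rw [map_add, map_add]
        congr 1
        rw [coeff_mul, coeff_mul]
        refine Finset.sum_congr rfl fun p hp => ?_
        have hp2 := Finset.HasAntidiagonal.mem_antidiagonal.1 hp
        rcases Nat.eq_zero_or_pos p.1 with hp1 | hp1
        · rw [hp1, coeff_xx_zero, zero_mul, zero_mul]
        · have hlt : p.2 < m := by omega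
          have e3 : ∀ j', coeff p.2 (Gser top h j') = coeff p.2 (CF b h j') :=
            fun j' => IH p.2 hlt j'
          congr 1
          simp only [map_add]
          congr 1
          · congr 1
            · by_cases h0 : j = 0
              · rw [if_pos h0, if_pos h0]
              · rw [if_neg h0, if_neg h0, e3]
            · exact e3 _
          · by_cases hc : top = false ∧ j = h
            · rw [if_pos hc, if_pos ((hflag j).1 hc)]
            · rw [if_neg hc, if_neg (fun hcc => hc ((hflag j).2 hcc)), e3]
  exact fun j => PowerSeries.ext fun m => main m j


open PowerSeries in
noncomputable def Umk (a : ℕ) : PowerSeries ℚ :=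
  PowerSeries.mk fun p => if (a + 2) ∣ (p + 2) ∧ a ≤ p then (1 : ℚ) else 0

open PowerSeries in
lemma coeff_Umk (a p : ℕ) :
    coeff p (Umk a) = if (a + 2) ∣ (p + 2) ∧ a ≤ p then (1 : ℚ) else 0 := by
  rw [Umk, coeff_mk]

open PowerSeries in
lemma Umk_mul (a : ℕ) : (1 - X ^ (a + 2) : PowerSeries ℚ) * Umk a = X ^ a := by
  ext p
  rw [sub_mul, one_mul, map_sub, coeff_X_pow_mul', coeff_X_pow, coeff_Umk]
  rcases Nat.lt_or_ge p (a + 2) with hlt | hge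
  · rw [if_neg (show ¬ (a + 2 ≤ p) from by omega), sub_zero]
    by_cases hpa : p = a
    · rw [if_pos (by subst hpa; exact ⟨dvd_refl _, le_refl _⟩), if_pos hpa]
    · rw [if_neg ?_, if_neg hpa]
      rintro ⟨⟨k, hk⟩, hap⟩
      rcases k with _ | _ | k
      · omega
      · omega
      · obtain ⟨t, ht⟩ : ∃ t, (a + 2) * k = t := ⟨_, rfl⟩
        have h2 : p + 2 = t + 2 * a + 4 := by rw [hk, ← ht]; ring
        omega
  · rw [if_pos hge, coeff_Umk, if_neg (show ¬ p = a by omega)]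
    have hiff : ((a + 2) ∣ (p + 2) ∧ a ≤ p)
        ↔ ((a + 2) ∣ (p - (a + 2) + 2) ∧ a ≤ p - (a + 2)) := by
      constructor
      · rintro ⟨⟨k, hk⟩, -⟩
        rcases k with _ | _ | k
        · exfalso; omega
        · exfalso; omega
        · obtain ⟨t, ht⟩ : ∃ t, (a + 2) * (k + 1) = t := ⟨_, rfl⟩
          have hk' : p + 2 = t + (a + 2) := by rw [hk, ← ht]; ring
          have htge : (a + 2) * 1 ≤ t := by rw [← ht]; exact Nat.mul_le_mul_left _ (by omega)
          refine ⟨⟨k + 1, by omega⟩, by omega⟩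
      · rintro ⟨⟨k, hk⟩, hle⟩
        obtain ⟨t, ht⟩ : ∃ t, (a + 2) * k = t := ⟨_, rfl⟩
        have hk' : p - (a + 2) + 2 = t := by rw [hk, ht]
        have h3 : (a + 2) * (k + 1) = t + (a + 2) := by rw [← ht]; ring
        exact ⟨⟨k + 1, by omega⟩, by omega⟩
    simp only [hiff, sub_self]

open PowerSeries in
lemma Umk_eq (a : ℕ) : Umk a = X ^ a * (1 - X ^ (a + 2) : PowerSeries ℚ)⁻¹ := by
  have h2 := PowerSeries.mul_inv_cancel (1 - X ^ (a + 2) : PowerSeries ℚ)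
    (constCoeff_one_sub_X_pow (a + 2) (by omega))
  calc Umk a = Umk a * ((1 - X ^ (a + 2)) * (1 - X ^ (a + 2) : PowerSeries ℚ)⁻¹) := by
        rw [h2, mul_one]
    _ = ((1 - X ^ (a + 2)) * Umk a) * (1 - X ^ (a + 2) : PowerSeries ℚ)⁻¹ := by ring
    _ = X ^ a * (1 - X ^ (a + 2) : PowerSeries ℚ)⁻¹ := by rw [Umk_mul]

open PowerSeries in
lemma CF_zero_closed (b h : ℕ) :
    CF b h 0 = (1 + X + X ^ 2 : PowerSeries ℚ)
      - (1 + X + X ^ 2) * (1 - X ^ 2) * Umk (2 * h + 1 + b) := by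
  rw [CF_of_le (b := b) (h := h) (j := 0) h (by omega), Umk_eq (2 * h + 1 + b),
    show 2 * h + 1 + b + 2 = 2 * 0 + 2 * h + 3 + b from by ring]
  have e2 := PowerSeries.mul_inv_cancel (1 - X ^ (2 * 0 + 2 * h + 3 + b) : PowerSeries ℚ)
    (constCoeff_one_sub_X_pow _ (by omega))
  linear_combination (1 + X + X ^ 2 : PowerSeries ℚ) * e2

open PowerSeries in
noncomputable def famG (h : ℕ) : PowerSeries ℚ :=
  Gser false h 0 - (if h = 0 then 0 else Gser true (h - 1) 0)

open PowerSeries in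
lemma famG_zero : famG 0 = (1 + X + X ^ 2 : PowerSeries ℚ)
    - (1 + X + X ^ 2) * (1 - X ^ 2) * Umk 1 := by
  rw [famG, if_pos rfl, sub_zero, Gser_eq_CF false 0 0,
    show (if false then 1 else 0) = 0 from rfl, CF_zero_closed 0 0,
    show 2 * 0 + 1 + 0 = 1 from by ring]

open PowerSeries in
lemma famG_succ (h : ℕ) : famG (h + 1)
    = ((1 + X + X ^ 2) * (1 - X ^ 2) : PowerSeries ℚ) * (Umk (2 * h + 2) - Umk (2 * h + 3)) := by
  rw [famG, if_neg (by omega), Nat.add_sub_cancel, Gser_eq_CF false (h + 1) 0,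
    Gser_eq_CF true h 0, show (if false then 1 else 0) = 0 from rfl,
    show (if true then 1 else 0) = 1 from rfl, CF_zero_closed 0 (h + 1), CF_zero_closed 1 h,
    show 2 * (h + 1) + 1 + 0 = 2 * h + 3 from by ring,
    show 2 * h + 1 + 1 = 2 * h + 2 from by ring]
  ring

open PowerSeries in
lemma famG_tri : Tri famG := by
  intro p h hph
  rw [famG, if_neg (by omega), map_sub, coeff_Gser, coeff_Gser, ← Finset.sum_sub_distrib]
  refine Finset.sum_eq_zero fun n hn => ?_
  have hn' := Finset.mem_range.1 hn
  rw [W_stable false true h (h - 1) n 0 (by omega) (fun _ => by omega) (by omega)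
    (fun ht => by cases ht), sub_self]

open PowerSeries in
lemma T_eq : PSSum (fun n => C ((NH n : ℚ)) * xx ^ n) = PSSum famG := by
  ext p
  rw [coeff_PSSum (tri_xx _), coeff_PSSum famG_tri]
  have hcoef : ∀ h, coeff p (famG h)
      = ∑ n ∈ Finset.range (p + 1),
          ((W false h n 0 : ℚ) - (if h = 0 then 0 else (W true (h - 1) n 0 : ℚ)))
            * coeff p (xx ^ n) := by
    intro h
    rcases eq_or_ne h 0 with rfl | hne
    · rw [famG, if_pos rfl, sub_zero, coeff_Gser]
      refine Finset.sum_congr rfl fun n _ => by rw [if_pos rfl, sub_zero]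
    · rw [famG, if_neg hne, map_sub, coeff_Gser, coeff_Gser, ← Finset.sum_sub_distrib]
      refine Finset.sum_congr rfl fun n _ => by rw [if_neg hne]; ring
  have hstep : ∀ n ∈ Finset.range (p + 1), coeff p (C ((NH n : ℚ)) * xx ^ n)
      = ∑ h ∈ Finset.range (p + 1),
          ((W false h n 0 : ℚ) - (if h = 0 then 0 else (W true (h - 1) n 0 : ℚ)))
            * coeff p (xx ^ n) := by
    intro n hn
    have hn' := Finset.mem_range.1 hn
    rw [coeff_C_mul, NH_eq_sum]
    rw [Finset.sum_subset (Finset.range_subset_range.2 (show n + 1 ≤ p + 1 by omega)) ?_, Finset.sum_mul]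
    intro h _ hh2
    have hh3 : n < h := by simp only [Finset.mem_range] at hh2; omega
    rw [W_stable false true h (h - 1) n 0 (by omega) (fun _ => by omega) (by omega)
      (fun ht => by cases ht), if_neg (by omega), sub_self]
  rw [Finset.sum_congr rfl hstep, Finset.sum_comm]
  exact Finset.sum_congr rfl fun h _ => (hcoef h).symm

open PowerSeries in
noncomputable def Dser : PowerSeries ℚ := PSSum (fun h => Umk (2 * h + 2) - Umk (2 * h + 3))

open PowerSeries in
lemma tri_D : Tri (fun h => Umk (2 * h + 2) - Umk (2 * h + 3)) := by
  intro p h hph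
  rw [map_sub, coeff_Umk, coeff_Umk, if_neg (fun hc => by omega), if_neg (fun hc => by omega)]
  ring

open PowerSeries in
lemma T_closed : PSSum (fun n => C ((NH n : ℚ)) * xx ^ n)
    = ((1 + X + X ^ 2 : PowerSeries ℚ) - (1 + X + X ^ 2) * (1 - X ^ 2) * Umk 1)
      + ((1 + X + X ^ 2) * (1 - X ^ 2) : PowerSeries ℚ) * Dser := by
  rw [T_eq, PSSum_shift famG_tri, famG_zero]
  congr 1
  have hf : (fun h => famG (h + 1))
      = fun h => ((1 + X + X ^ 2) * (1 - X ^ 2) : PowerSeries ℚ)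
          * (Umk (2 * h + 2) - Umk (2 * h + 3)) := funext famG_succ
  rw [hf, ← PSSum_mul_left _ tri_D]
  rfl


lemma sum_pair_range (g : ℕ → ℚ) (N : ℕ) :
    ∑ h ∈ Finset.range N, (g (2 * h + 4) + g (2 * h + 5))
      = (∑ d ∈ Finset.range (2 * N + 4), g d) - (g 0 + g 1 + g 2 + g 3) := by
  induction N with
  | zero =>
    simp [Finset.sum_range_succ]
  | succ N ih =>
    rw [Finset.sum_range_succ, ih,
      show 2 * (N + 1) + 4 = (2 * N + 4 + 1) + 1 from by ring,
      Finset.sum_range_succ g (2 * N + 4 + 1),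
      Finset.sum_range_succ g (2 * N + 4),
      show 2 * N + 4 + 1 = 2 * N + 5 from by ring]
    ring

open PowerSeries in
lemma coeff_Dser (p : ℕ) : coeff p Dser
    = (∑ d ∈ (p + 2).divisors, (-1 : ℚ) ^ d) + 1 - (if 2 ∣ (p + 2) then 1 else 0)
      + (if 3 ∣ (p + 2) then 1 else 0) := by
  set g : ℕ → ℚ := fun d => if d ∣ (p + 2) then (-1 : ℚ) ^ d else 0 with hg
  rw [Dser, coeff_PSSum tri_D]
  have hterm : ∀ h ∈ Finset.range (p + 1),
      coeff p (Umk (2 * h + 2) - Umk (2 * h + 3)) = g (2 * h + 4) + g (2 * h + 5) := by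
    intro h _
    rw [map_sub, coeff_Umk, coeff_Umk, show 2 * h + 2 + 2 = 2 * h + 4 from by ring,
      show 2 * h + 3 + 2 = 2 * h + 5 from by ring]
    have r1 : ((2 * h + 4) ∣ (p + 2) ∧ 2 * h + 2 ≤ p) ↔ (2 * h + 4) ∣ (p + 2) :=
      ⟨And.left, fun hx => ⟨hx, by have := Nat.le_of_dvd (by omega) hx; omega⟩⟩
    have r2 : ((2 * h + 5) ∣ (p + 2) ∧ 2 * h + 3 ≤ p) ↔ (2 * h + 5) ∣ (p + 2) :=
      ⟨And.left, fun hx => ⟨hx, by have := Nat.le_of_dvd (by omega) hx; omega⟩⟩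
    have e4 : (-1 : ℚ) ^ (2 * h + 4) = 1 := Even.neg_one_pow ⟨h + 2, by ring⟩
    have e5 : (-1 : ℚ) ^ (2 * h + 5) = -1 := Odd.neg_one_pow ⟨h + 2, by ring⟩
    simp only [hg, r1, r2, e4, e5]
    split_ifs <;> norm_num
  rw [Finset.sum_congr rfl hterm, sum_pair_range g (p + 1)]
  have hrange : ∑ d ∈ Finset.range (2 * (p + 1) + 4), g d
      = ∑ d ∈ (p + 2).divisors, (-1 : ℚ) ^ d := by
    rw [hg, ← Finset.sum_filter]
    congr 1
    ext d
    simp only [Finset.mem_filter, Finset.mem_range, Nat.mem_divisors]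
    constructor
    · rintro ⟨-, hd⟩; exact ⟨hd, by omega⟩
    · rintro ⟨hd, -⟩; exact ⟨by have := Nat.le_of_dvd (by omega) hd; omega, hd⟩
  rw [hrange]
  have hg0 : g 0 = 0 := by
    simp only [hg]
    rw [if_neg (fun hc => by have := Nat.eq_zero_of_zero_dvd hc; omega)]
  have hg1 : g 1 = -1 := by
    simp only [hg]
    rw [if_pos (one_dvd _)]
    norm_num
  have hg2 : g 2 = if 2 ∣ (p + 2) then 1 else 0 := by
    simp only [hg]
    split_ifs <;> norm_num
  have hg3 : g 3 = if 3 ∣ (p + 2) then -1 else 0 := by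
    simp only [hg]
    split_ifs <;> norm_num
  rw [hg0, hg1, hg2, hg3]
  split_ifs <;> ring

open PowerSeries in
noncomputable def Lser : PowerSeries ℚ :=
  PowerSeries.mk fun m => if m = 0 then (0 : ℚ) else ∑ d ∈ m.divisors, (-1 : ℚ) ^ (d - 1)

open PowerSeries in
noncomputable def Modd : PowerSeries ℚ :=
  PowerSeries.mk fun q => if q = 0 then (0 : ℚ) else if 2 ∣ q then 0 else 1

open PowerSeries in
lemma bracket : (X : PowerSeries ℚ) ^ 2 * Dser - X ^ 2 * Umk 1 + Lser = Modd := by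
  ext q
  rw [map_add, map_sub, coeff_X_pow_mul', coeff_X_pow_mul']
  rcases q with - | q
  · rw [if_neg (by omega), if_neg (by omega), Lser, coeff_mk, if_pos rfl, Modd, coeff_mk,
      if_pos rfl]
    ring
  rcases q with - | p
  · rw [if_neg (by omega), if_neg (by omega), Lser, coeff_mk, if_neg (by omega), Modd,
      coeff_mk, if_neg (by omega), if_neg (show ¬ 2 ∣ 1 by omega), Nat.divisors_one]
    simp
  · rw [show p + 1 + 1 = p + 2 from rfl]
    rw [if_pos (show 2 ≤ p + 2 by omega), if_pos (show 2 ≤ p + 2 by omega),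
      show p + 2 - 2 = p from by omega, coeff_Dser, coeff_Umk, Lser, coeff_mk,
      if_neg (show ¬ (p + 2 = 0) by omega), Modd, coeff_mk, if_neg (show ¬ (p + 2 = 0) by omega)]
    have h31 : ((1 + 2) ∣ (p + 2) ∧ 1 ≤ p) ↔ 3 ∣ (p + 2) := by
      constructor
      · rintro ⟨h1, -⟩
        exact h1
      · intro h1
        exact ⟨h1, by have := Nat.le_of_dvd (by omega) h1; omega⟩
    simp only [h31]
    have hpair : ∑ d ∈ (p + 2).divisors, ((-1 : ℚ) ^ d + (-1 : ℚ) ^ (d - 1)) = 0 := by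
      refine Finset.sum_eq_zero fun d hd => ?_
      have hd1 : 0 < d := Nat.pos_of_mem_divisors hd
      obtain ⟨d', rfl⟩ : ∃ d', d = d' + 1 := ⟨d - 1, by omega⟩
      rw [Nat.add_sub_cancel, pow_succ]
      ring
    rw [Finset.sum_add_distrib] at hpair
    split_ifs <;> linarith [hpair]

open PowerSeries in
lemma modd_id : (1 - X ^ 2 : PowerSeries ℚ) * Modd = X := by
  ext q
  rw [sub_mul, one_mul, map_sub, coeff_X_pow_mul', Modd, coeff_mk, coeff_mk,
    show (X : PowerSeries ℚ) = X ^ 1 from (pow_one _).symm, coeff_X_pow]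
  split_ifs <;> try norm_num
  all_goals omega


end MAux

open PowerSeries in
/-- In `ℚ[[v]]`: the family `(NH n · (v (1+v+v²)⁻¹)^n)` is formally summable and
`v² ∑_{n≥0} NH n (v (1+v+v²)⁻¹)^n
  = (1+v+v²)(v²-1) ∑_{h≥1} (-1)^{h-1} ∑_{k≥1} v^{hk} + v(1+v)(1+v+v²)`,
where `∑_{h≥1} (-1)^{h-1} ∑_{k≥1} v^{hk} = ∑_{m≥1} (∑_{d ∣ m} (-1)^{d-1}) v^m`. -/
theorem no_horiz_genfun_closed :
    PSSummable (fun n => C ((NH n : ℚ)) * (X * (1 + X + X ^ 2 : PowerSeries ℚ)⁻¹) ^ n) ∧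
    (X : PowerSeries ℚ) ^ 2 *
        PSSum (fun n => C ((NH n : ℚ)) * (X * (1 + X + X ^ 2 : PowerSeries ℚ)⁻¹) ^ n)
      = (1 + X + X ^ 2) * (X ^ 2 - 1) *
          (PowerSeries.mk fun m =>
            if m = 0 then (0 : ℚ) else ∑ d ∈ m.divisors, (-1 : ℚ) ^ (d - 1))
        + X * (1 + X) * (1 + X + X ^ 2) := by
  constructor
  · exact MAux.tri_summable (MAux.tri_xx _)
  · have hxx : (fun n => C ((NH n : ℚ)) * (X * (1 + X + X ^ 2 : PowerSeries ℚ)⁻¹) ^ n)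
        = (fun n => C ((NH n : ℚ)) * MAux.xx ^ n) := rfl
    have hL : (PowerSeries.mk fun m =>
        if m = 0 then (0 : ℚ) else ∑ d ∈ m.divisors, (-1 : ℚ) ^ (d - 1)) = MAux.Lser := rfl
    rw [hxx, MAux.T_closed, hL]
    have key : (1 - X ^ 2 : PowerSeries ℚ)
        * (X ^ 2 * MAux.Dser - X ^ 2 * MAux.Umk 1 + MAux.Lser) = X := by
      rw [MAux.bracket, MAux.modd_id]
    linear_combination (1 + X + X ^ 2 : PowerSeries ℚ) * key
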